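/- For every e ∈ ℝ^n and every v ∈ ℝ^m with ‖v‖_∞ ≤ 1, the vector f(e, v) = A e + B(φ(K e + v) − v) belongs to the convex hull of the finite set { A_K(𝒥) e : 𝒥 ⊆ {1, …, m} }. -/

import Mathlib

/-- The scalar saturation function `sat(x) = sign(x) · min(|x|, 1)`
(saturation bounds normalized to 1). -/
noncomputable def sat (x : ℝ) : ℝ := Real.sign x * min |x| 1

/-- The componentwise saturation function `φ : ℝ^m → ℝ^m`. -/
noncomputable def satVec {m : ℕ} (u : Fin m → ℝ) : Fin m → ℝ := fun j => sat (u j)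

/-- The saturated error dynamics `f(e, v) = A e + B (φ(K e + v) − v)`. -/
noncomputable def errDyn {n m : ℕ} (A : Matrix (Fin n) (Fin n) ℝ)
    (B : Matrix (Fin n) (Fin m) ℝ) (K : Matrix (Fin m) (Fin n) ℝ)
    (e : Fin n → ℝ) (v : Fin m → ℝ) : Fin n → ℝ :=
  A.mulVec e + B.mulVec (satVec (K.mulVec e + v) - v)

/-- `A_K(𝒥) = A + Σ_{j ∈ 𝒥} B_{(j)} K_j`, with `B_{(j)}` the `j`-th column of `B`
and `K_j` the `j`-th row of `K`. -/
noncomputable def AK {n m : ℕ} (A : Matrix (Fin n) (Fin n) ℝ)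
    (B : Matrix (Fin n) (Fin m) ℝ) (K : Matrix (Fin m) (Fin n) ℝ)
    (J : Finset (Fin m)) : Matrix (Fin n) (Fin n) ℝ :=
  A + ∑ j ∈ J, Matrix.vecMulVec (fun i => B i j) (K j)

lemma sat_eq (x : ℝ) : sat x = max (-1) (min x 1) := by
  unfold sat
  rcases lt_trichotomy x 0 with h | h | h
  · rw [Real.sign_of_neg h, abs_of_neg h]
    rcases le_total x (-1) with h1 | h1
    · rw [min_eq_right (by linarith : (1:ℝ) ≤ -x), min_eq_left (by linarith : x ≤ 1),
        max_eq_left h1]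
      ring
    · rw [min_eq_left (by linarith : -x ≤ 1), min_eq_left (by linarith : x ≤ 1),
        max_eq_right h1]
      ring
  · simp [h]
  · rw [Real.sign_of_pos h, abs_of_pos h, one_mul,
      max_eq_right (le_min (by linarith) (by linarith))]

lemma sat_shift (x v : ℝ) (hv : |v| ≤ 1) : ∃ t, 0 ≤ t ∧ t ≤ 1 ∧ sat (x + v) - v = t * x := by
  have hv1 : -1 ≤ v := neg_le_of_abs_le hv
  have hv2 : v ≤ 1 := le_of_abs_le hv
  rcases lt_trichotomy x 0 with h | h | h
  · have hle : sat (x + v) ≤ v := by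
      rw [sat_eq]
      exact max_le hv1 (le_trans (min_le_left _ _) (by linarith))
    have hge : x + v ≤ sat (x + v) := by
      rw [sat_eq]
      exact le_trans (le_min le_rfl (by linarith)) (le_max_right _ _)
    refine ⟨(sat (x + v) - v) / x, ?_, ?_, ?_⟩
    · exact div_nonneg_iff.mpr (Or.inr ⟨by linarith, h.le⟩)
    · rw [div_le_one_iff]
      right; right; exact ⟨h, by linarith⟩
    · rw [div_mul_cancel₀ _ h.ne]
  · refine ⟨0, le_rfl, zero_le_one, ?_⟩
    rw [h, zero_add, sat_eq, min_eq_left hv2, max_eq_right hv1]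
    ring
  · have hge : v ≤ sat (x + v) := by
      rw [sat_eq]
      exact le_trans (le_min (by linarith) hv2) (le_max_right _ _)
    have hle : sat (x + v) ≤ x + v := by
      rw [sat_eq]
      exact max_le (by linarith) (min_le_left _ _)
    refine ⟨(sat (x + v) - v) / x, ?_, ?_, ?_⟩
    · exact div_nonneg (by linarith) h.le
    · exact (div_le_one h).mpr (by linarith)
    · rw [div_mul_cancel₀ _ h.ne']

lemma mem_hull_aux {ι : Type*} [DecidableEq ι] {E : Type*} [AddCommGroup E] [Module ℝ E]
    (t : ι → ℝ) (ht0 : ∀ j, 0 ≤ t j) (ht1 : ∀ j, t j ≤ 1) (c : ι → E) :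
    ∀ (s : Finset ι) (x : E),
      x + ∑ j ∈ s, t j • c j ∈
        convexHull ℝ ((fun J : Finset ι => x + ∑ j ∈ J, c j) '' {J | J ⊆ s}) := by
  intro s
  induction s using Finset.induction_on with
  | empty =>
    intro x
    simp only [Finset.sum_empty, add_zero]
    exact subset_convexHull ℝ _ ⟨∅, by simp⟩
  | @insert a s ha IH =>
    intro x
    set S : Set E := (fun J : Finset ι => x + ∑ j ∈ J, c j) '' {J | J ⊆ insert a s} with hS
    have hp : x + ∑ j ∈ s, t j • c j ∈ convexHull ℝ S := by
      refine convexHull_mono ?_ (IH x)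
      exact Set.image_mono (fun J hJ => hJ.trans (Finset.subset_insert a s))
    have hq : (x + c a) + ∑ j ∈ s, t j • c j ∈ convexHull ℝ S := by
      refine convexHull_mono ?_ (IH (x + c a))
      rintro y ⟨J, hJ, rfl⟩
      refine ⟨insert a J, Finset.insert_subset_insert a hJ, ?_⟩
      show x + ∑ j ∈ insert a J, c j = x + c a + ∑ j ∈ J, c j
      rw [Finset.sum_insert (fun h => ha (hJ h))]
      abel
    have key : (1 - t a) • (x + ∑ j ∈ s, t j • c j) + t a • ((x + c a) + ∑ j ∈ s, t j • c j)
        ∈ convexHull ℝ S :=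
      (convex_convexHull ℝ S) hp hq (by linarith [ht1 a]) (ht0 a) (by ring)
    convert key using 1
    rw [Finset.sum_insert ha]
    module

/-- For every `e ∈ ℝ^n` and every `v` with `‖v‖_∞ ≤ 1`, the vector
`f(e, v) = A e + B (φ(K e + v) − v)` lies in the convex hull of the finite set
`{ A_K(𝒥) e : 𝒥 ⊆ {1, …, m} }`. -/
theorem stmt1 {n m : ℕ} (A : Matrix (Fin n) (Fin n) ℝ) (B : Matrix (Fin n) (Fin m) ℝ)
    (K : Matrix (Fin m) (Fin n) ℝ) (e : Fin n → ℝ) (v : Fin m → ℝ)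
    (hv : ∀ j, |v j| ≤ 1) :
    errDyn A B K e v ∈
      convexHull ℝ (Set.range (fun J : Finset (Fin m) => (AK A B K J).mulVec e)) := by
  classical
  choose t ht0 ht1 ht using fun j => sat_shift (K.mulVec e j) (v j) (hv j)
  set c : Fin m → (Fin n → ℝ) := fun j => (K.mulVec e j) • (fun i => B i j) with hc
  have h1 : ∀ J : Finset (Fin m), (AK A B K J).mulVec e = A.mulVec e + ∑ j ∈ J, c j := by
    intro J
    funext i
    simp only [AK, Matrix.mulVec, dotProduct, Matrix.add_apply, Matrix.sum_apply,
      Matrix.vecMulVec_apply, Pi.add_apply, Finset.sum_apply, hc, Pi.smul_apply, smul_eq_mul,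
      add_mul, Finset.sum_add_distrib]
    congr 1
    simp only [Finset.sum_mul]
    rw [Finset.sum_comm]
    exact Finset.sum_congr rfl fun j _ => Finset.sum_congr rfl fun k _ => by ring
  have hd : (satVec (K.mulVec e + v) - v) = fun j => t j * K.mulVec e j := by
    funext j
    have : satVec (K.mulVec e + v) j = sat (K.mulVec e j + v j) := rfl
    rw [Pi.sub_apply, this, ht j]
  have heq : errDyn A B K e v = A.mulVec e + ∑ j, t j • c j := by
    rw [errDyn, hd]
    congr 1
    funext i
    simp only [Matrix.mulVec, dotProduct, Finset.sum_apply, hc, Pi.smul_apply,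
      smul_eq_mul]
    exact Finset.sum_congr rfl fun j _ => by ring
  have key := mem_hull_aux t ht0 ht1 c Finset.univ (A.mulVec e)
  have hset : ((fun J : Finset (Fin m) => A.mulVec e + ∑ j ∈ J, c j) '' {J | J ⊆ Finset.univ})
      = Set.range (fun J : Finset (Fin m) => (AK A B K J).mulVec e) := by
    rw [show {J : Finset (Fin m) | J ⊆ Finset.univ} = Set.univ from
      Set.eq_univ_of_forall fun J => Finset.subset_univ J, Set.image_univ]
    exact congrArg Set.range (funext fun J => (h1 J).symm)
  rw [heq, ← hset]
  exact key
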